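/- Let v ∈ ℂ^N (N = Md) be partitioned into length-d blocks with ‖v[ℓ]‖_2 > 0 for all ℓ, and let A be an L×N matrix (L = Rd) with d×d blocks A[ℓ,r]. Then ‖Av‖_{2,1} ≤ ρ_c(A)‖v‖_{2,1}, and if the values ρ_c(A J_ℓ) for ℓ = 1,…,M are not all equal, the inequality is strict, where J_ℓ is the N×d matrix whose ℓ-th d×d block is I_d and all other blocks are zero. -/

import Mathlib

open Matrix

noncomputable def rho {m n : Type*} [Fintype m] [Fintype n] [DecidableEq n]
    (A : Matrix m n ℂ) : ℝ :=
  ‖LinearMap.toContinuousLinearMap (Matrix.toEuclideanLin A)‖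

noncomputable def enormC {n : Type*} [Fintype n] (v : n → ℂ) : ℝ :=
  Real.sqrt (∑ i, ‖v i‖ ^ 2)

def blk {α β γ : Type*} (D : Matrix α (β × γ) ℂ) (ℓ : β) : Matrix α γ ℂ :=
  Matrix.of fun i j => D i (ℓ, j)

def blk2 {ι κ d₁ d₂ : Type*} (A : Matrix (ι × d₁) (κ × d₂) ℂ) (ℓ : ι) (r : κ) :
    Matrix d₁ d₂ ℂ :=
  Matrix.of fun i j => A (ℓ, i) (r, j)

noncomputable def rhoc {ι κ d : Type*} [Fintype ι] [Fintype κ] [Fintype d] [DecidableEq d]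
    (A : Matrix (ι × d) (κ × d) ℂ) : ℝ :=
  ⨆ r : κ, ∑ ℓ : ι, rho (blk2 A ℓ r)

noncomputable def vnorm1 {ι d : Type*} [Fintype ι] [Fintype d] (v : ι × d → ℂ) : ℝ :=
  ∑ ℓ : ι, enormC (fun j => v (ℓ, j))

noncomputable def vnormInf {ι d : Type*} [Fintype ι] [Fintype d] (v : ι × d → ℂ) : ℝ :=
  ⨆ ℓ : ι, enormC (fun j => v (ℓ, j))

noncomputable def pinv {α n : Type*} [Fintype α] [Fintype n] [DecidableEq n]
    (B : Matrix α n ℂ) : Matrix n α ℂ :=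
  (Bᴴ * B)⁻¹ * Bᴴ

/-- selector matrix whose ℓ-th d×d block is the identity -/
def Jsel {M d : ℕ} (ℓ : Fin M) : Matrix (Fin M × Fin d) (Unit × Fin d) ℂ :=
  Matrix.of fun p q => if p.1 = ℓ ∧ p.2 = q.2 then 1 else 0

lemma enorm_eq_norm {n : Type*} [Fintype n] (u : n → ℂ) :
    enormC u = ‖(WithLp.equiv 2 (n → ℂ)).symm u‖ := by
  rw [EuclideanSpace.norm_eq]; rfl

lemma rho_nonneg {m n : Type*} [Fintype m] [Fintype n] [DecidableEq n]
    (A : Matrix m n ℂ) : 0 ≤ rho A := norm_nonneg _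

lemma enorm_mulVec_le {m n : Type*} [Fintype m] [Fintype n] [DecidableEq n]
    (B : Matrix m n ℂ) (u : n → ℂ) :
    enormC (B.mulVec u) ≤ rho B * enormC u := by
  have h := (LinearMap.toContinuousLinearMap (Matrix.toEuclideanLin B)).le_opNorm
    ((WithLp.equiv 2 (n → ℂ)).symm u)
  simpa [enorm_eq_norm, rho, Matrix.toEuclideanLin_apply_piLp_toLp] using h

lemma rhoc_mul_Jsel (R M d : ℕ) (A : Matrix (Fin R × Fin d) (Fin M × Fin d) ℂ)
    (r : Fin M) : rhoc (A * Jsel r) = ∑ ℓ : Fin R, rho (blk2 A ℓ r) := by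
  have hb : ∀ ℓ : Fin R, blk2 (A * Jsel r) ℓ () = blk2 A ℓ r := by
    intro ℓ
    ext i j
    change ∑ k, A (ℓ, i) k * Jsel (d := d) r k ((), j) = A (ℓ, i) (r, j)
    simp only [blk2, Matrix.of_apply, Matrix.mul_apply, Jsel, Fintype.sum_prod_type]
    rw [Finset.sum_eq_single r]
    · simp
    · intro b _ hb
      simp [hb]
    · simp
  unfold rhoc
  rw [ciSup_unique]
  simp [hb]

theorem vnorm1_mulVec_le_rhoc (R M d : ℕ) (A : Matrix (Fin R × Fin d) (Fin M × Fin d) ℂ)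
    (v : Fin M × Fin d → ℂ) (hv : ∀ ℓ : Fin M, 0 < enormC (fun j => v (ℓ, j))) :
    vnorm1 (A.mulVec v) ≤ rhoc A * vnorm1 v ∧
    ((¬ ∀ ℓ ℓ' : Fin M, rhoc (A * Jsel ℓ) = rhoc (A * Jsel ℓ')) →
      vnorm1 (A.mulVec v) < rhoc A * vnorm1 v) := by
  classical
  set c : Fin M → ℝ := fun r => ∑ ℓ : Fin R, rho (blk2 A ℓ r) with hc
  -- blockwise bound
  have hblock : ∀ ℓ : Fin R, enormC (fun j => A.mulVec v (ℓ, j)) ≤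
      ∑ r : Fin M, rho (blk2 A ℓ r) * enormC (fun k => v (r, k)) := by
    intro ℓ
    have hfun : (fun j => A.mulVec v (ℓ, j)) =
        ∑ r : Fin M, (blk2 A ℓ r).mulVec (fun k => v (r, k)) := by
      funext j
      rw [Finset.sum_apply]
      simp [Matrix.mulVec, dotProduct, blk2, Fintype.sum_prod_type]
    calc enormC (fun j => A.mulVec v (ℓ, j))
        = ‖(WithLp.linearEquiv 2 ℂ (Fin d → ℂ)).symm
            (∑ r : Fin M, (blk2 A ℓ r).mulVec (fun k => v (r, k)))‖ := by
          rw [enorm_eq_norm, hfun]; rfl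
      _ = ‖∑ r : Fin M, (WithLp.linearEquiv 2 ℂ (Fin d → ℂ)).symm
            ((blk2 A ℓ r).mulVec (fun k => v (r, k)))‖ := by rw [map_sum]
      _ ≤ ∑ r : Fin M, ‖(WithLp.linearEquiv 2 ℂ (Fin d → ℂ)).symm
            ((blk2 A ℓ r).mulVec (fun k => v (r, k)))‖ := norm_sum_le _ _
      _ = ∑ r : Fin M, enormC ((blk2 A ℓ r).mulVec (fun k => v (r, k))) := by
          refine Finset.sum_congr rfl fun r _ => ?_
          rw [enorm_eq_norm]; rfl
      _ ≤ ∑ r : Fin M, rho (blk2 A ℓ r) * enormC (fun k => v (r, k)) :=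
          Finset.sum_le_sum fun r _ => enorm_mulVec_le _ _
  have hstep : vnorm1 (A.mulVec v) ≤ ∑ r : Fin M, c r * enormC (fun k => v (r, k)) := by
    calc vnorm1 (A.mulVec v)
        ≤ ∑ ℓ : Fin R, ∑ r : Fin M, rho (blk2 A ℓ r) * enormC (fun k => v (r, k)) :=
          Finset.sum_le_sum fun ℓ _ => hblock ℓ
      _ = ∑ r : Fin M, c r * enormC (fun k => v (r, k)) := by
          rw [Finset.sum_comm]
          simp [hc, Finset.sum_mul]
  have hle_rhoc : ∀ r : Fin M, c r ≤ rhoc A := fun r =>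
    le_ciSup (Set.Finite.bddAbove (Set.finite_range c)) r
  have hfinal : ∑ r : Fin M, c r * enormC (fun k => v (r, k)) ≤ rhoc A * vnorm1 v := by
    rw [vnorm1, Finset.mul_sum]
    exact Finset.sum_le_sum fun r _ =>
      mul_le_mul_of_nonneg_right (hle_rhoc r) (hv r).le
  refine ⟨hstep.trans hfinal, ?_⟩
  intro hne
  push_neg at hne
  obtain ⟨ℓ₀, ℓ₁, h01⟩ := hne
  have hc01 : c ℓ₀ ≠ c ℓ₁ := by
    simpa [rhoc_mul_Jsel, hc] using h01
  haveI : Nonempty (Fin M) := ⟨ℓ₀⟩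
  obtain ⟨r₀, hr₀⟩ := Finite.exists_max c
  have hrhoc : rhoc A = c r₀ := le_antisymm (ciSup_le hr₀) (hle_rhoc r₀)
  have hexists : ∃ r : Fin M, c r < rhoc A := by
    rcases lt_or_gt_of_ne hc01 with h | h
    · exact ⟨ℓ₀, lt_of_lt_of_le h ((hle_rhoc ℓ₁))⟩
    · exact ⟨ℓ₁, lt_of_lt_of_le h ((hle_rhoc ℓ₀))⟩
  obtain ⟨r₁, hr₁⟩ := hexists
  have hstrict : ∑ r : Fin M, c r * enormC (fun k => v (r, k)) < rhoc A * vnorm1 v := by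
    rw [vnorm1, Finset.mul_sum]
    refine Finset.sum_lt_sum (fun r _ =>
      mul_le_mul_of_nonneg_right (hle_rhoc r) (hv r).le) ⟨r₁, Finset.mem_univ _, ?_⟩
    exact mul_lt_mul_of_pos_right hr₁ (hv r₁)
  exact lt_of_le_of_lt hstep hstrict
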